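/- Let G be a finite abelian group and D ⊆ G with 0 ∉ D and −D = D. If the character sum ψ(D) takes exactly two distinct values as ψ ranges over non-principal characters of G, then Cay(G,D) is strongly regular. -/

import Mathlib

open scoped Classical

open Finset

theorem stmt_3 {G : Type*} [AddCommGroup G] [Fintype G]
    (D : Finset G) (h0 : (0 : G) ∉ D) (hsym : ∀ d ∈ D, -d ∈ D)
    (htwo : ∃ a b : ℂ, a ≠ b ∧
      {v : ℂ | ∃ ψ : AddChar G ℂ, ψ ≠ 1 ∧ v = ∑ x ∈ D, ψ x} = {a, b}) :
    ∃ k l μ : ℕ,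
      (SimpleGraph.fromRel fun x y : G => x - y ∈ D).IsSRGWith (Fintype.card G) k l μ := by
  classical
  obtain ⟨a, b, hab, hset⟩ := htwo
  set H := SimpleGraph.fromRel fun x y : G => x - y ∈ D with hH
  have hmemne : ∀ {x y : G}, x - y ∈ D → x ≠ y := by
    intro x y h hxy
    apply h0
    simpa [hxy] using h
  have hadj : ∀ x y : G, H.Adj x y ↔ x - y ∈ D := by
    intro x y
    constructor
    · rintro ⟨hne, h | h⟩
      · exact h
      · have := hsym _ h
        simpa using this
    · intro h
      exact ⟨hmemne h, Or.inl h⟩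
  set S : AddChar G ℂ → ℂ := fun ψ => ∑ x ∈ D, ψ x with hS
  have hquad : ∀ ψ : AddChar G ℂ, ψ ≠ 1 → S ψ * S ψ = (a + b) * S ψ - a * b := by
    intro ψ hψ
    have h : S ψ ∈ ({a, b} : Set ℂ) := by
      rw [← hset]; exact ⟨ψ, hψ, rfl⟩
    rcases h with h | h <;> (rw [h]; ring)
  have hS1 : S 1 = (D.card : ℂ) := by simp [hS]
  have hSneg : ∀ ψ : AddChar G ℂ, (∑ x ∈ D, ψ (-x)) = S ψ := by
    intro ψ
    refine Finset.sum_nbij' (fun x => -x) (fun x => -x) ?_ ?_ ?_ ?_ ?_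
    · intro x hx; exact hsym _ hx
    · intro x hx; exact hsym _ hx
    · intro x _; simp
    · intro x _; simp
    · intro x _; simp
  set N : G → ℕ := fun g => ((D ×ˢ D).filter fun p => p.1 - p.2 = g).card with hNdef
  have hcardG : (Fintype.card G : ℂ) ≠ 0 := by
    exact_mod_cast Fintype.card_ne_zero
  -- the key Fourier identity
  have key : ∀ g : G, g ≠ 0 →
      (N g : ℂ) * (Fintype.card G : ℂ) =
        (D.card : ℂ) ^ 2 +
          (a + b) * ((Fintype.card G : ℂ) * (if g ∈ D then 1 else 0) - (D.card : ℂ)) + a * b := by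
    intro g hg
    have step1 : (N g : ℂ) * (Fintype.card G : ℂ) =
        ∑ ψ : AddChar G ℂ, S ψ * S ψ * ψ (-g) := by
      have e1 : ∀ p : G × G, (∑ ψ : AddChar G ℂ, ψ (p.1 - p.2 - g)) =
          if p.1 - p.2 = g then (Fintype.card G : ℂ) else 0 := by
        intro p
        rw [AddChar.sum_apply_eq_ite]
        simp [sub_eq_zero]
      calc (N g : ℂ) * (Fintype.card G : ℂ)
          = ∑ p ∈ (D ×ˢ D).filter fun p => p.1 - p.2 = g, (Fintype.card G : ℂ) := by
            rw [Finset.sum_const]; simp [hNdef, mul_comm]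
        _ = ∑ p ∈ D ×ˢ D, if p.1 - p.2 = g then (Fintype.card G : ℂ) else 0 :=
            Finset.sum_filter _ _
        _ = ∑ p ∈ D ×ˢ D, ∑ ψ : AddChar G ℂ, ψ (p.1 - p.2 - g) := by
            simp_rw [e1]
        _ = ∑ ψ : AddChar G ℂ, ∑ p ∈ D ×ˢ D, ψ (p.1 - p.2 - g) := Finset.sum_comm
        _ = ∑ ψ : AddChar G ℂ, S ψ * S ψ * ψ (-g) := by
            refine Finset.sum_congr rfl fun ψ _ => ?_
            rw [Finset.sum_product]
            have : ∀ x y : G, ψ (x - y - g) = ψ x * ψ (-y) * ψ (-g) := by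
              intro x y
              rw [show x - y - g = x + (-y) + (-g) by abel, AddChar.map_add_eq_mul,
                AddChar.map_add_eq_mul]
            simp_rw [this]
            rw [show S ψ * S ψ * ψ (-g) = S ψ * ((∑ y ∈ D, ψ (-y)) * ψ (-g)) by
              rw [hSneg]; ring, hS]
            simp only [Finset.sum_mul, Finset.mul_sum, mul_assoc]
            exact Finset.sum_comm
    have hT1 : ∑ ψ : AddChar G ℂ, S ψ * ψ (-g)
        = (Fintype.card G : ℂ) * (if g ∈ D then 1 else 0) := by
      simp_rw [hS, Finset.sum_mul]
      rw [Finset.sum_comm]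
      have h2 : ∀ x : G, (∑ ψ : AddChar G ℂ, ψ x * ψ (-g))
          = if x = g then (Fintype.card G : ℂ) else 0 := by
        intro x
        simp_rw [← AddChar.map_add_eq_mul]
        rw [AddChar.sum_apply_eq_ite]
        simp [add_neg_eq_zero]
      simp_rw [h2]
      rw [Finset.sum_ite_eq' D g fun _ => (Fintype.card G : ℂ)]
      split_ifs <;> ring
    have hT2 : ∑ ψ : AddChar G ℂ, (ψ (-g) : ℂ) = 0 := by
      rw [AddChar.sum_apply_eq_ite]
      simp [neg_eq_zero, hg]
    rw [step1, ← Finset.add_sum_erase _ (fun ψ => S ψ * S ψ * ψ (-g)) (Finset.mem_univ 1)]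
    have h1term : S 1 * S 1 * (1 : AddChar G ℂ) (-g) = (D.card : ℂ) * D.card := by
      simp [hS1]
    have herase : ∑ ψ ∈ Finset.univ.erase (1 : AddChar G ℂ), S ψ * S ψ * ψ (-g)
        = (a + b) * ((Fintype.card G : ℂ) * (if g ∈ D then 1 else 0) - (D.card : ℂ))
          + a * b := by
      have hc : ∀ ψ ∈ Finset.univ.erase (1 : AddChar G ℂ),
          S ψ * S ψ * ψ (-g) = (a + b) * (S ψ * ψ (-g)) - a * b * ψ (-g) := by
        intro ψ hψ
        rw [hquad ψ (Finset.ne_of_mem_erase hψ)]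
        ring
      rw [Finset.sum_congr rfl hc, Finset.sum_sub_distrib, ← Finset.mul_sum, ← Finset.mul_sum]
      rw [Finset.sum_erase_eq_sub (Finset.mem_univ (1 : AddChar G ℂ)),
        Finset.sum_erase_eq_sub (Finset.mem_univ (1 : AddChar G ℂ))]
      rw [hT1, hT2, hS1]
      simp only [AddChar.one_apply, mul_one]
      ring
    rw [h1term, herase]
    ring
  have hDconst : ∀ g ∈ D, ∀ g' ∈ D, N g = N g' := by
    intro g hg g' hg'
    have hgne : g ≠ 0 := fun h => h0 (h ▸ hg)
    have hg'ne : g' ≠ 0 := fun h => h0 (h ▸ hg')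
    have k1 := key g hgne
    have k2 := key g' hg'ne
    rw [if_pos hg] at k1
    rw [if_pos hg'] at k2
    exact_mod_cast mul_right_cancel₀ hcardG (k1.trans k2.symm)
  have hMconst : ∀ g, g ≠ 0 → g ∉ D → ∀ g', g' ≠ 0 → g' ∉ D → N g = N g' := by
    intro g hg hgD g' hg' hg'D
    have k1 := key g hg
    have k2 := key g' hg'
    rw [if_neg hgD] at k1
    rw [if_neg hg'D] at k2
    exact_mod_cast mul_right_cancel₀ hcardG (k1.trans k2.symm)
  have hcn : ∀ v w : G, Fintype.card (H.commonNeighbors v w) = N (v - w) := by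
    intro v w
    rw [← Set.toFinset_card]
    refine Finset.card_nbij' (fun z => (v - z, w - z)) (fun p => v - p.1) ?_ ?_ ?_ ?_
    · intro z hz
      rw [Finset.mem_coe, Set.mem_toFinset, SimpleGraph.mem_commonNeighbors, hadj, hadj] at hz
      refine Finset.mem_filter.2 ⟨Finset.mem_product.2 ⟨hz.1, hz.2⟩, ?_⟩
      exact sub_sub_sub_cancel_right v w z
    · intro p hp
      obtain ⟨hmem, h3⟩ := Finset.mem_filter.1 hp
      obtain ⟨h1, h2⟩ := Finset.mem_product.1 hmem
      rw [Finset.mem_coe, Set.mem_toFinset, SimpleGraph.mem_commonNeighbors, hadj, hadj]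
      constructor
      · rw [sub_sub_cancel]; exact h1
      · have e : w - (v - p.1) = p.2 := by
          rw [show w - (v - p.1) = p.1 - (v - w) from by abel, ← h3, sub_sub_cancel]
        rw [e]; exact h2
    · intro z _
      exact sub_sub_cancel v z
    · intro p hp
      obtain ⟨hmem, h3⟩ := Finset.mem_filter.1 hp
      have e : w - (v - p.1) = p.2 := by
        rw [show w - (v - p.1) = p.1 - (v - w) from by abel, ← h3, sub_sub_cancel]
      exact Prod.ext (sub_sub_cancel v p.1) e
  have hdeg : H.IsRegularOfDegree D.card := by
    intro v
    show (H.neighborFinset v).card = D.card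
    refine Finset.card_nbij' (fun z => v - z) (fun d => v - d) ?_ ?_ ?_ ?_
    · intro z hz
      rw [Finset.mem_coe, SimpleGraph.mem_neighborFinset, hadj] at hz
      exact hz
    · intro d hd
      rw [Finset.mem_coe, SimpleGraph.mem_neighborFinset, hadj, sub_sub_cancel]
      exact hd
    · intro z _
      exact sub_sub_cancel v z
    · intro d _
      exact sub_sub_cancel v d
  refine ⟨D.card, if h : D.Nonempty then N h.choose else 0,
    if h : ∃ g : G, g ≠ 0 ∧ g ∉ D then N h.choose else 0, rfl, hdeg, ?_, ?_⟩
  · intro v w hvw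
    have hd : v - w ∈ D := (hadj v w).1 hvw
    have hne : D.Nonempty := ⟨_, hd⟩
    rw [hcn, dif_pos hne]
    exact hDconst _ hd _ hne.choose_spec
  · intro v w hne hnadj
    have hd : v - w ∉ D := fun h => hnadj ((hadj v w).2 h)
    have hz : v - w ≠ 0 := sub_ne_zero.mpr hne
    have hex : ∃ g : G, g ≠ 0 ∧ g ∉ D := ⟨v - w, hz, hd⟩
    rw [hcn, dif_pos hex]
    exact hMconst _ hz hd _ hex.choose_spec.1 hex.choose_spec.2
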